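/- Let T be a triangulated category satisfying the octahedral axiom, P a connective class of objects closed under isomorphisms and finite direct sums containing 0, and I ⊆ P a subclass closed under isomorphisms and finite direct sums containing 0. Fix d ≥ 1 and set A^{(d)} := (P ∗ ΣP ∗ ⋯ ∗ Σ^d P) ∩ { X : Hom_T(X, Σ^m I') = 0 for all I' ∈ I, m ≥ 1 } and A^{(d+1)} := (P ∗ ΣP ∗ ⋯ ∗ Σ^{d+1}P) ∩ the same kernel class. Assume I is covariantly finite in A^{(d)}. Then every object P₀ ∈ P admits d + 1 distinguished triangles Y_k → I_k → Y_{k+1} → ΣY_k for 0 ≤ k ≤ d, with Y_0 = P₀, I_k ∈ I for all k, and Y_{k+1} ∈ A^{(d+1)} for all k. (This expresses that the corresponding extriangulated category has dominant dimension at least d + 1.) -/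

import Mathlib

/-!
Statement 6: if `I` is covariantly finite in `A^{(d)}`, then every `P₀ ∈ P` admits
`d + 1` distinguished triangles `Y_k ⟶ I_k ⟶ Y_{k+1} ⟶ ΣY_k` (`0 ≤ k ≤ d`) with
`Y_0 = P₀`, `I_k ∈ I` and `Y_{k+1} ∈ A^{(d+1)}`: the corresponding extriangulated
category has dominant dimension at least `d + 1`.
-/

open CategoryTheory Limits Pretriangulated

universe v u

namespace AuslanderIyamaStmt6

variable {C : Type u} [Category.{v} C] [HasZeroObject C] [HasShift C ℤ] [Preadditive C]
  [∀ n : ℤ, (shiftFunctor C n).Additive] [Pretriangulated C] [HasBinaryBiproducts C]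

/-- `S₁ ∗ S₂`: objects `Y` fitting in a distinguished triangle `X ⟶ Y ⟶ Z ⟶ X⟦1⟧`
with `X ∈ S₁` and `Z ∈ S₂`. -/
def star (S₁ S₂ : Set C) : Set C :=
  {Y | ∃ (X Z : C) (f : X ⟶ Y) (g : Y ⟶ Z) (h : Z ⟶ X⟦(1 : ℤ)⟧),
    (Triangle.mk f g h ∈ distTriang C) ∧ X ∈ S₁ ∧ Z ∈ S₂}

/-- `Σⁿ S`, closed under isomorphism. -/
def shiftSet (n : ℤ) (S : Set C) : Set C :=
  {X | ∃ Y ∈ S, Nonempty (X ≅ Y⟦n⟧)}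

/-- `V n = P ∗ ΣP ∗ ⋯ ∗ Σⁿ P` (associated to the left; by the octahedral axiom `∗` is
associative so the grouping is irrelevant). -/
def V (P : Set C) : ℕ → Set C
  | 0 => P
  | n + 1 => star (V P n) (shiftSet ((n : ℤ) + 1) P)

/-- The kernel class `{X : Hom(X, Σ^m I') = 0 for all I' ∈ I, m ≥ 1}`. -/
def extKer (I : Set C) : Set C :=
  {X | ∀ I' ∈ I, ∀ m : ℤ, 1 ≤ m → ∀ f : X ⟶ I'⟦m⟧, f = 0}

/-- `I` is covariantly finite in `S`: every `X ∈ S` admits a left `I`-approximation. -/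
def CovFin (I S : Set C) : Prop :=
  ∀ X ∈ S, ∃ I₀ ∈ I, ∃ f : X ⟶ I₀, ∀ I' ∈ I, ∀ g : X ⟶ I', ∃ h : I₀ ⟶ I', f ≫ h = g


section Aux

variable {C : Type u} [Category.{v} C] [HasZeroObject C] [HasShift C ℤ] [Preadditive C]
  [∀ n : ℤ, (shiftFunctor C n).Additive] [Pretriangulated C] [HasBinaryBiproducts C]

open ZeroObject Triangulated in
lemma zero_mem_shiftSet (n : ℤ) (P : Set C)
    (hPzero : ∀ ⦃X : C⦄, IsZero X → X ∈ P) : (0 : C) ∈ shiftSet n P :=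
  ⟨0, hPzero (isZero_zero C),
    ⟨(isZero_zero C).iso ((shiftFunctor C n).map_isZero (isZero_zero C))⟩⟩

open ZeroObject Triangulated in
lemma V_mono (P : Set C) (hPzero : ∀ ⦃X : C⦄, IsZero X → X ∈ P) (n : ℕ) :
    V P n ⊆ V P (n + 1) := fun Y hY =>
  ⟨Y, 0, 𝟙 Y, 0, 0, contractible_distinguished Y, hY, zero_mem_shiftSet _ _ hPzero⟩

lemma V_le (P : Set C) (hPzero : ∀ ⦃X : C⦄, IsZero X → X ∈ P) {m n : ℕ} (h : m ≤ n) :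
    V P m ⊆ V P n := by
  induction n with
  | zero => simpa [Nat.le_zero.mp h] using le_refl (V P 0)
  | succ n ih =>
    rcases Nat.lt_or_ge m (n+1) with h' | h'
    · exact (ih (Nat.lt_succ_iff.mp h')).trans (V_mono P hPzero n)
    · have hmn : m = n + 1 := le_antisymm h h'
      subst hmn; exact le_refl _

open Triangulated in
lemma cone_mem_V [IsTriangulated C] (P : Set C)
    (hPzero : ∀ ⦃X : C⦄, IsZero X → X ∈ P) :
    ∀ (k : ℕ) (A B Z : C) (f : A ⟶ B) (g : B ⟶ Z) (h : Z ⟶ A⟦(1:ℤ)⟧),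
      (Triangle.mk f g h ∈ distTriang C) → A ∈ V P k → B ∈ P → Z ∈ V P (k + 1) := by
  intro k
  induction k with
  | zero =>
    intro A B Z f g h hT hA hB
    exact ⟨B, A⟦(1:ℤ)⟧, g, h, -f⟦(1:ℤ)⟧', rot_of_distTriang _ hT, hB,
      ⟨A, hA, ⟨Iso.refl _⟩⟩⟩
  | succ k ih =>
    intro A B Z f g h hT hA hB
    obtain ⟨X, W, u, p, q, hT', hX, Q, hQ, ⟨e⟩⟩ := hA
    obtain ⟨C', g', h', hT''⟩ := distinguished_cocone_triangle (u ≫ f)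
    let O := someOctahedron rfl hT' hT hT''
    have hC' : C' ∈ V P (k + 1) := ih X B C' (u ≫ f) g' h' hT'' hX hB
    exact ⟨C', W⟦(1:ℤ)⟧, O.m₃, h ≫ p⟦(1:ℤ)⟧', -O.m₁⟦(1:ℤ)⟧',
      rot_of_distTriang _ O.mem, hC', Q, hQ,
      ⟨((shiftFunctor C (1:ℤ)).mapIso e).trans
        ((shiftFunctorAdd' C ((k:ℤ)+1) 1 (((k+1:ℕ):ℤ)+1) (by push_cast; ring)).symm.app Q)⟩⟩

lemma cone_mem_extKer (P I : Set C) (hIP : I ⊆ P)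
    (hPconn : ∀ ⦃X Y : C⦄, X ∈ P → Y ∈ P → ∀ n : ℤ, 1 ≤ n → ∀ f : X ⟶ Y⟦n⟧, f = 0)
    {Y I₀ Z : C} (hY : Y ∈ extKer I) (hI₀ : I₀ ∈ I)
    {a : Y ⟶ I₀} {g : I₀ ⟶ Z} {h : Z ⟶ Y⟦(1:ℤ)⟧}
    (hT : Triangle.mk a g h ∈ distTriang C)
    (happrox : ∀ I' ∈ I, ∀ t : Y ⟶ I', ∃ s : I₀ ⟶ I', a ≫ s = t) :
    Z ∈ extKer I := by
  intro I' hI' m hm f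
  have h0 : g ≫ f = 0 := hPconn (hIP hI₀) (hIP hI') m hm _
  obtain ⟨f', hf'⟩ := Triangle.yoneda_exact₃ _ hT f h0
  have iso := (shiftFunctorAdd' C (m-1) 1 m (by ring)).app I'
  obtain ⟨f'', hf''⟩ := (shiftFunctor C (1:ℤ)).map_surjective (f' ≫ iso.hom)
  rcases eq_or_lt_of_le hm with heq | hlt
  · -- m = 1
    subst heq
    set t : Y ⟶ I' := f'' ≫ (shiftFunctorZero' C ((1:ℤ)-1) (by ring)).hom.app I' with ht
    obtain ⟨s, hs⟩ := happrox I' hI' t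
    have hf''eq : f'' = a ≫ s ≫ (shiftFunctorZero' C ((1:ℤ)-1) (by ring)).inv.app I' := by
      rw [← Category.assoc, hs, ht]
      erw [Category.assoc, Iso.hom_inv_id_app, Category.comp_id]
    have hff : f' = ((shiftFunctor C (1:ℤ)).map f'') ≫ iso.inv := by
      rw [hf'']; simp
    rw [hf', hff, hf''eq]
    simp only [Functor.map_comp, ← Category.assoc]
    have hz : (Triangle.mk a g h).mor₃ ≫ (shiftFunctor C (1:ℤ)).map a = 0 :=
      comp_distTriang_mor_zero₃₁ _ hT
    erw [Functor.map_comp, Functor.map_comp]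
    simp only [← Category.assoc]
    erw [hz]
    simp
    rfl
  · -- m ≥ 2
    have hz : f'' = 0 := hY I' hI' (m-1) (by omega) f''
    have hf0 : f' = 0 := by
      have h1 : f' ≫ iso.hom = 0 := by rw [← hf'', hz, Functor.map_zero]
      calc f' = (f' ≫ iso.hom) ≫ iso.inv := by simp
        _ = 0 := by rw [h1]; simp
    rw [hf', hf0, comp_zero]; rfl

end Aux

theorem statement6 [IsTriangulated C] (d : ℕ) (hd : 1 ≤ d) (P I : Set C) (hIP : I ⊆ P)
    (hPiso : ∀ ⦃X Y : C⦄, (X ≅ Y) → X ∈ P → Y ∈ P)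
    (hPsum : ∀ ⦃X Y : C⦄, X ∈ P → Y ∈ P → (X ⊞ Y) ∈ P)
    (hPzero : ∀ ⦃X : C⦄, IsZero X → X ∈ P)
    (hPconn : ∀ ⦃X Y : C⦄, X ∈ P → Y ∈ P → ∀ n : ℤ, 1 ≤ n → ∀ f : X ⟶ Y⟦n⟧, f = 0)
    (hIiso : ∀ ⦃X Y : C⦄, (X ≅ Y) → X ∈ I → Y ∈ I)
    (hIsum : ∀ ⦃X Y : C⦄, X ∈ I → Y ∈ I → (X ⊞ Y) ∈ I)
    (hIzero : ∀ ⦃X : C⦄, IsZero X → X ∈ I)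
    (hcov : CovFin I (V P d ∩ extKer I))
    (P₀ : C) (hP₀ : P₀ ∈ P) :
    ∃ (Y : ℕ → C), Y 0 = P₀ ∧
      ∀ k ≤ d, ∃ Ik ∈ I, ∃ (f : Y k ⟶ Ik) (g : Ik ⟶ Y (k + 1))
        (h : Y (k + 1) ⟶ (Y k)⟦(1 : ℤ)⟧),
        (Triangle.mk f g h ∈ distTriang C) ∧
          Y (k + 1) ∈ V P (d + 1) ∩ extKer I := by
  -- key induction
  have hPker : ∀ X ∈ P, X ∈ extKer I := fun X hX I' hI' m hm f =>
    hPconn hX (hIP hI') m hm f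
  have key : ∀ n : ℕ, n ≤ d + 1 → ∃ Y : ℕ → C, Y 0 = P₀ ∧
      (Y n ∈ V P n ∩ extKer I) ∧
      ∀ k < n, ∃ Ik ∈ I, ∃ (f : Y k ⟶ Ik) (g : Ik ⟶ Y (k + 1))
        (h : Y (k + 1) ⟶ (Y k)⟦(1 : ℤ)⟧),
        (Triangle.mk f g h ∈ distTriang C) ∧
          Y (k + 1) ∈ V P (d + 1) ∩ extKer I := by
    intro n
    induction n with
    | zero =>
      intro _
      exact ⟨fun _ => P₀, rfl, ⟨hP₀, hPker P₀ hP₀⟩, fun k hk => absurd hk (by omega)⟩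
    | succ n ih =>
      intro hn
      obtain ⟨Y, hY0, ⟨hYV, hYK⟩, hprev⟩ := ih (by omega)
      have hYd : Y n ∈ V P d ∩ extKer I :=
        ⟨V_le P hPzero (by omega : n ≤ d) hYV, hYK⟩
      obtain ⟨I₀, hI₀, a, happrox⟩ := hcov (Y n) hYd
      obtain ⟨Z, g, h, hT⟩ := distinguished_cocone_triangle a
      have hZV : Z ∈ V P (n + 1) :=
        cone_mem_V P hPzero n (Y n) I₀ Z a g h hT hYV (hIP hI₀)
      have hZK : Z ∈ extKer I :=
        cone_mem_extKer P I hIP hPconn hYK hI₀ hT happrox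
      refine ⟨fun m => if m = n + 1 then Z else Y m, by simp [hY0], ?_, ?_⟩
      · simpa using ⟨hZV, hZK⟩
      · intro k hk
        rcases Nat.lt_or_ge k n with hk' | hk'
        · have e1 : (if k = n + 1 then Z else Y k) = Y k := if_neg (by omega)
          have e2 : (if k + 1 = n + 1 then Z else Y (k+1)) = Y (k+1) := if_neg (by omega)
          have h' := hprev k hk'
          rw [← e1, ← e2] at h'
          exact h'
        · have hkn : k = n := by omega
          subst hkn
          have e1 : (if k = k + 1 then Z else Y k) = Y k := if_neg (by omega)
          have e2 : (if k + 1 = k + 1 then Z else Y (k+1)) = Z := if_pos rfl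
          have h' : ∃ Ik ∈ I, ∃ (f : Y k ⟶ Ik) (g : Ik ⟶ Z)
              (h : Z ⟶ (Y k)⟦(1 : ℤ)⟧),
              (Triangle.mk f g h ∈ distTriang C) ∧ Z ∈ V P (d + 1) ∩ extKer I :=
            ⟨I₀, hI₀, a, g, h, hT,
              V_le P hPzero (by omega : k + 1 ≤ d + 1) hZV, hZK⟩
          rw [← e2, ← e1] at h'
          exact h'
  obtain ⟨Y, hY0, _, hmain⟩ := key (d + 1) le_rfl
  exact ⟨Y, hY0, fun k hk => hmain k (by omega)⟩

end AuslanderIyamaStmt6
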